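/- For every ε > 0 there exists N such that for all n > N, Σ_{r ≤ n} p_r^(1/n) lies strictly between (1-ε) n p_n^(1/n) · n/(n+1) and (1+ε) n p_n^(1/n) · n/(n+1); equivalently, (1/(n · p_n^(1/n))) Σ_{r ≤ n} p_r^(1/n) → 1 as n → ∞. -/

import Mathlib

open Filter Real
open Topology

/-- `p n` is the n-th prime, 1-indexed: `p 1 = 2`. -/
noncomputable def p (n : ℕ) : ℕ := Nat.nth Nat.Prime (n - 1)

lemma centralBinom_le_pow (m : ℕ) (hm : 0 < m) :
    Nat.centralBinom m ≤ (2 * m) ^ Nat.primeCounting' (2 * m + 1) := by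
  rw [← Nat.primesBelow_card_eq_primeCounting']
  calc Nat.centralBinom m
      = ∏ q ∈ Finset.range (2 * m + 1), q ^ (Nat.centralBinom m).factorization q :=
        (Nat.prod_pow_factorization_centralBinom m).symm
    _ = ∏ q ∈ Nat.primesBelow (2 * m + 1), q ^ (Nat.centralBinom m).factorization q := by
        refine (Finset.prod_subset (Finset.filter_subset _ _) ?_).symm
        intro q hq hq'
        have hq'' : ¬ q.Prime := by
          simp only [Nat.primesBelow, Finset.mem_filter] at hq'
          tauto
        rw [Nat.factorization_eq_zero_of_not_prime _ hq'', pow_zero]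
    _ ≤ ∏ _q ∈ Nat.primesBelow (2 * m + 1), (2 * m) := by
        refine Finset.prod_le_prod' ?_
        intro q _
        exact Nat.pow_factorization_choose_le (by omega)
    _ = (2 * m) ^ (Nat.primesBelow (2 * m + 1)).card := Finset.prod_const _

set_option maxHeartbeats 1000000 in
lemma p_lt_sq (n : ℕ) (hn : 10 ≤ n) : (p n : ℝ) < 25 * (n : ℝ) ^ 2 := by
  have hP : (p n).Prime := Nat.prime_nth_prime _
  have h11 : 11 ≤ p n := by
    have := Nat.add_two_le_nth_prime (n - 1)
    unfold p; omega
  have hodd : p n % 2 = 1 := Nat.odd_iff.mp (hP.odd_of_ne_two (by omega))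
  set m := p n / 2 with hmdef
  have hm : p n = 2 * m + 1 := by omega
  have hm5 : 5 ≤ m := by omega
  have hπ : Nat.primeCounting' (2 * m + 1) = n - 1 := by
    rw [← hm]; exact Nat.primeCounting'_nth_eq (n - 1)
  have hnat : 4 ^ m < m * (2 * m) ^ (n - 1) := by
    calc 4 ^ m < m * Nat.centralBinom m := Nat.four_pow_lt_mul_centralBinom m (by omega)
      _ ≤ m * (2 * m) ^ Nat.primeCounting' (2 * m + 1) :=
          Nat.mul_le_mul_left _ (centralBinom_le_pow m (by omega))
      _ = m * (2 * m) ^ (n - 1) := by rw [hπ]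
  have hr : (4 : ℝ) ^ m < (m : ℝ) * (2 * (m : ℝ)) ^ (n - 1) := by exact_mod_cast hnat
  have hm0 : (0 : ℝ) < m := by exact_mod_cast (by omega : 0 < m)
  have hlog : (m : ℝ) * Real.log 4 < Real.log m + (n - 1 : ℕ) * Real.log (2 * m) := by
    have h := Real.log_lt_log (by positivity) hr
    rwa [Real.log_pow, Real.log_mul (by positivity) (by positivity), Real.log_pow] at h
  have hPpos : (0 : ℝ) < (p n : ℝ) := by exact_mod_cast hP.pos
  have hlm : Real.log m ≤ Real.log (p n) :=
    Real.log_le_log hm0 (by exact_mod_cast (by omega : m ≤ p n))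
  have hl2m : Real.log (2 * m) ≤ Real.log (p n) :=
    Real.log_le_log (by positivity) (by push_cast [hm]; linarith)
  have hlogP : 0 < Real.log (p n) := Real.log_pos (by exact_mod_cast (by omega : 1 < p n))
  have hcast : ((n - 1 : ℕ) : ℝ) = (n : ℝ) - 1 := by
    have : 1 ≤ n := by omega
    push_cast [this]; ring
  have hcomb : (m : ℝ) * Real.log 4 < (n : ℝ) * Real.log (p n) := by
    have hn1 : ((n : ℝ) - 1) ≥ 0 := by
      have : (10 : ℝ) ≤ n := by exact_mod_cast hn
      linarith
    calc (m : ℝ) * Real.log 4 < Real.log m + (n - 1 : ℕ) * Real.log (2 * m) := hlog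
      _ ≤ Real.log (p n) + ((n : ℝ) - 1) * Real.log (p n) := by
          rw [hcast]
          have := mul_le_mul_of_nonneg_left hl2m hn1
          linarith
      _ = (n : ℝ) * Real.log (p n) := by ring
  have hlog4 : (1.38 : ℝ) < Real.log 4 := by
    have h2 := Real.log_two_gt_d9
    have : Real.log 4 = 2 * Real.log 2 := by
      rw [show (4 : ℝ) = 2 ^ 2 by norm_num, Real.log_pow]; push_cast; ring
    rw [this]; linarith
  have hmeq : (m : ℝ) = ((p n : ℝ) - 1) / 2 := by
    have : ((p n : ℕ) : ℝ) = 2 * (m : ℝ) + 1 := by exact_mod_cast hm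
    linarith
  have h1 : 1.38 * (m : ℝ) < (n : ℝ) * Real.log (p n) := by
    have := mul_lt_mul_of_pos_right hlog4 hm0
    nlinarith
  have hn0 : (0 : ℝ) < (n : ℝ) := by exact_mod_cast (by omega : 0 < n)
  have hnLP : 0 ≤ (n : ℝ) * Real.log (p n) := by positivity
  have h2 : (p n : ℝ) - 1 < 2 * ((n : ℝ) * Real.log (p n)) := by linarith
  have h11' : (11 : ℝ) ≤ (p n : ℝ) := by exact_mod_cast h11
  have hs : Real.sqrt (p n) * Real.sqrt (p n) = (p n : ℝ) := Real.mul_self_sqrt hPpos.le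
  have hsp : 0 < Real.sqrt (p n) := Real.sqrt_pos.mpr hPpos
  have hLP : Real.log (p n) ≤ 2 * Real.sqrt (p n) := by
    have h3 : Real.log (p n) / 2 = Real.log (Real.sqrt (p n)) := (Real.log_sqrt hPpos.le).symm
    have h4 : Real.log (Real.sqrt (p n)) ≤ Real.sqrt (p n) - 1 :=
      Real.log_le_sub_one_of_pos hsp
    linarith
  have hprod : (n : ℝ) * Real.log (p n) ≤ (n : ℝ) * (2 * Real.sqrt (p n)) :=
    mul_le_mul_of_nonneg_left hLP hn0.le
  have hnsp : 0 ≤ (n : ℝ) * Real.sqrt (p n) := by positivity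
  have h4 : (p n : ℝ) < 5 * (n : ℝ) * Real.sqrt (p n) := by nlinarith [h2, hprod, h11', hnsp]
  have h5 : Real.sqrt (p n) < 5 * (n : ℝ) := by nlinarith [h4, hs, hsp]
  nlinarith [h5, hs, hsp.le, hn0.le, mul_self_nonneg (5 * (n : ℝ) - Real.sqrt (p n))]

lemma tendsto_log_p_div : Tendsto (fun n : ℕ => Real.log (p n) / n) atTop (𝓝 0) := by
  have hg : Tendsto (fun n : ℕ => (Real.log 25 + 2 * Real.log n) / n) atTop (𝓝 0) := by
    have h1 : Tendsto (fun x : ℝ => (Real.log 25 + 2 * Real.log x) / x) atTop (𝓝 0) := by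
      have hlog : Tendsto (fun x : ℝ => Real.log x / x) atTop (𝓝 0) :=
        Real.isLittleO_log_id_atTop.tendsto_div_nhds_zero
      have hc : Tendsto (fun x : ℝ => Real.log 25 / x) atTop (𝓝 0) :=
        tendsto_const_nhds.div_atTop tendsto_id
      have h2 := hc.add (hlog.const_mul 2)
      simp only [mul_zero, add_zero] at h2
      exact h2.congr fun x => by ring
    exact h1.comp tendsto_natCast_atTop_atTop
  refine squeeze_zero' ?_ ?_ hg
  · filter_upwards [eventually_ge_atTop 1] with n hn
    have h2 : (2 : ℝ) ≤ (p n : ℝ) := by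
      exact_mod_cast (Nat.prime_nth_prime (n - 1)).two_le
    have : 0 ≤ Real.log (p n) := Real.log_nonneg (by linarith)
    positivity
  · filter_upwards [eventually_ge_atTop 10] with n hn
    have hn0 : (0 : ℝ) < n := by exact_mod_cast (by omega : 0 < n)
    have h2 : (2 : ℝ) ≤ (p n : ℝ) := by
      exact_mod_cast (Nat.prime_nth_prime (n - 1)).two_le
    have hlt := p_lt_sq n hn
    have hlog : Real.log (p n) ≤ Real.log 25 + 2 * Real.log n := by
      have := Real.log_le_log (by linarith) hlt.le
      rw [Real.log_mul (by norm_num) (by positivity), Real.log_pow] at this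
      push_cast at this
      linarith
    exact (div_le_div_iff_of_pos_right hn0).mpr hlog

lemma tendsto_p_rpow : Tendsto (fun n : ℕ => (p n : ℝ) ^ ((1 : ℝ) / n)) atTop (𝓝 1) := by
  have hpos : ∀ n : ℕ, (0 : ℝ) < (p n : ℝ) := fun n => by
    exact_mod_cast (Nat.prime_nth_prime (n - 1)).pos
  have heq : (fun n : ℕ => (p n : ℝ) ^ ((1 : ℝ) / n)) =
      fun n : ℕ => Real.exp (Real.log (p n) / n) := by
    funext n
    rw [Real.rpow_def_of_pos (hpos n), mul_one_div]
  rw [heq]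
  have := (Real.continuous_exp.tendsto 0).comp tendsto_log_p_div
  simpa [Function.comp_def] using this

theorem stmt_19 :
    ∀ ε : ℝ, 0 < ε → ∃ N : ℕ, ∀ n > N,
      (1 - ε) * n * (p n : ℝ) ^ ((1 : ℝ) / n) * ((n : ℝ) / (n + 1)) <
          ∑ r ∈ Finset.Icc 1 n, (p r : ℝ) ^ ((1 : ℝ) / n) ∧
        ∑ r ∈ Finset.Icc 1 n, (p r : ℝ) ^ ((1 : ℝ) / n) <
          (1 + ε) * n * (p n : ℝ) ^ ((1 : ℝ) / n) * ((n : ℝ) / (n + 1)) := by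
  intro ε hε
  set δ := min ε (1 / 2) with hδdef
  have hδ0 : 0 < δ := lt_min hε (by norm_num)
  have hδε : δ ≤ ε := min_le_left _ _
  have hδh : δ ≤ 1 / 2 := min_le_right _ _
  have h1δ : 0 < 1 - δ := by linarith
  have hlt : (1 : ℝ) < 1 / (1 - δ) := by
    rw [lt_div_iff₀ h1δ]; linarith
  obtain ⟨N₁, hN₁⟩ := eventually_atTop.mp (tendsto_p_rpow.eventually_lt_const hlt)
  refine ⟨max N₁ ⌈1 / ε⌉₊, fun n hn => ?_⟩
  have hnN₁ : N₁ ≤ n := le_of_lt (lt_of_le_of_lt (le_max_left _ _) hn)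
  have hn1 : 1 ≤ n := by
    have := lt_of_le_of_lt (Nat.zero_le _) hn
    omega
  have hn0 : (0 : ℝ) < (n : ℝ) := by exact_mod_cast (by omega : 0 < n)
  have hεn : 1 < ε * n := by
    have hceil : (1 / ε) ≤ (⌈1 / ε⌉₊ : ℝ) := Nat.le_ceil _
    have hlt2 : (⌈1 / ε⌉₊ : ℝ) < n := by
      exact_mod_cast lt_of_le_of_lt (le_max_right N₁ _) hn
    have h1e : (1 / ε) < (n : ℝ) := lt_of_le_of_lt hceil hlt2
    have := mul_lt_mul_of_pos_left h1e hε
    rwa [mul_one_div, div_self (ne_of_gt hε)] at this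
  set q := (p n : ℝ) ^ ((1 : ℝ) / n) with hqdef
  have hPn : (p n).Prime := Nat.prime_nth_prime _
  have hq0 : (0 : ℝ) < q := Real.rpow_pos_of_pos (by exact_mod_cast hPn.pos) _
  have hqlt : q < 1 / (1 - δ) := hN₁ n hnN₁
  have hcard : (Finset.Icc 1 n).card = n := by rw [Nat.card_Icc]; omega
  have hupper : ∑ r ∈ Finset.Icc 1 n, (p r : ℝ) ^ ((1 : ℝ) / n) ≤ n * q := by
    calc ∑ r ∈ Finset.Icc 1 n, (p r : ℝ) ^ ((1 : ℝ) / n)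
        ≤ ∑ _r ∈ Finset.Icc 1 n, q := by
          refine Finset.sum_le_sum ?_
          intro r hr
          have hrn : p r ≤ p n := by
            apply Nat.nth_monotone Nat.infinite_setOf_prime
            simp only [Finset.mem_Icc] at hr
            omega
          exact Real.rpow_le_rpow (by positivity) (by exact_mod_cast hrn) (by positivity)
      _ = n * q := by rw [Finset.sum_const, hcard, nsmul_eq_mul]
  have hlower : (n : ℝ) ≤ ∑ r ∈ Finset.Icc 1 n, (p r : ℝ) ^ ((1 : ℝ) / n) := by
    calc (n : ℝ) = ∑ _r ∈ Finset.Icc 1 n, (1 : ℝ) := by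
          rw [Finset.sum_const, hcard, nsmul_eq_mul, mul_one]
      _ ≤ ∑ r ∈ Finset.Icc 1 n, (p r : ℝ) ^ ((1 : ℝ) / n) := by
          refine Finset.sum_le_sum ?_
          intro r _
          exact Real.one_le_rpow
            (by exact_mod_cast (Nat.prime_nth_prime (r - 1)).one_le) (by positivity)
  have hF0 : (0 : ℝ) ≤ (n : ℝ) / (n + 1) := by positivity
  have hF1 : (n : ℝ) / (n + 1) ≤ 1 := by
    rw [div_le_one (by linarith)]; linarith
  constructor
  · have hkey : (1 - ε) * (q * ((n : ℝ) / (n + 1))) < 1 := by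
      have ha : (1 - ε) * (q * ((n : ℝ) / (n + 1))) ≤ (1 - δ) * (q * ((n : ℝ) / (n + 1))) :=
        mul_le_mul_of_nonneg_right (by linarith) (by positivity)
      have hqF : q * ((n : ℝ) / (n + 1)) ≤ q * 1 := mul_le_mul_of_nonneg_left hF1 hq0.le
      have hb : (1 - δ) * (q * ((n : ℝ) / (n + 1))) ≤ (1 - δ) * q := by
        have := mul_le_mul_of_nonneg_left hqF h1δ.le
        simpa using this
      have hc : (1 - δ) * q < 1 := by
        have := (lt_div_iff₀ h1δ).mp hqlt
        linarith
      linarith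
    calc (1 - ε) * n * q * ((n : ℝ) / (n + 1))
        = ((1 - ε) * (q * ((n : ℝ) / (n + 1)))) * n := by ring
      _ < 1 * n := mul_lt_mul_of_pos_right hkey hn0
      _ = (n : ℝ) := one_mul _
      _ ≤ _ := hlower
  · have h : (1 : ℝ) < (1 + ε) * ((n : ℝ) / (n + 1)) := by
      rw [mul_div_assoc'] at *
      rw [lt_div_iff₀ (by linarith : (0 : ℝ) < (n : ℝ) + 1)]
      nlinarith
    calc ∑ r ∈ Finset.Icc 1 n, (p r : ℝ) ^ ((1 : ℝ) / n) ≤ n * q := hupper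
      _ = (n * q) * 1 := (mul_one _).symm
      _ < (n * q) * ((1 + ε) * ((n : ℝ) / (n + 1))) :=
          mul_lt_mul_of_pos_left h (by positivity)
      _ = (1 + ε) * n * q * ((n : ℝ) / (n + 1)) := by ring
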